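/- Let P* be an optimal tuple of n points in [0,1]^2. Then for every admissible up-shift up(P*,i,δ) and every q ∈ [0,1]^2, the open local discrepancy satisfies δ(up(P*,i,δ), q) ≤ d*(P*). Analogously, for every admissible right-shift ri(P*,i,δ) and every q ∈ [0,1]^2, δ(ri(P*,i,δ), q) ≤ d*(P*). -/

import Mathlib

open Finset

noncomputable section

open scoped Classical

/-- Number of points of the tuple `P` lying in the open anchored box `[0,q)`. -/
def openCount {n d : ℕ} (P : Fin n → Fin d → ℝ) (q : Fin d → ℝ) : ℕ :=
  (Finset.univ.filter (fun i : Fin n => ∀ j, P i j < q j)).card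

/-- Number of points of the tuple `P` lying in the closed anchored box `[0,q]`. -/
def closedCount {n d : ℕ} (P : Fin n → Fin d → ℝ) (q : Fin d → ℝ) : ℕ :=
  (Finset.univ.filter (fun i : Fin n => ∀ j, P i j ≤ q j)).card

/-- Open local discrepancy `δ(P,q) = ∏ q_j − #{i : x⁽ⁱ⁾ ∈ [0,q)}/n`. -/
def openDisc {n d : ℕ} (P : Fin n → Fin d → ℝ) (q : Fin d → ℝ) : ℝ :=
  (∏ j, q j) - (openCount P q : ℝ) / n

/-- Closed local discrepancy `δ̄(P,q) = #{i : x⁽ⁱ⁾ ∈ [0,q]}/n − ∏ q_j`. -/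
def closedDisc {n d : ℕ} (P : Fin n → Fin d → ℝ) (q : Fin d → ℝ) : ℝ :=
  (closedCount P q : ℝ) / n - ∏ j, q j

/-- `max(δ(P,q), δ̄(P,q))`. -/
def localDisc {n d : ℕ} (P : Fin n → Fin d → ℝ) (q : Fin d → ℝ) : ℝ :=
  max (openDisc P q) (closedDisc P q)

/-- The L∞ star discrepancy `d*(P) = sup_{q ∈ [0,1]^d} max(δ(P,q), δ̄(P,q))`. -/
def starDisc {n d : ℕ} (P : Fin n → Fin d → ℝ) : ℝ :=
  sSup {r : ℝ | ∃ q : Fin d → ℝ, (∀ j, q j ∈ Set.Icc (0:ℝ) 1) ∧ r = localDisc P q}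

/-- A tuple of `n` points in `[0,1]^2` is optimal if its star discrepancy is minimal
among all `n`-point tuples in `[0,1]^2`. -/
def IsOptimal {n : ℕ} (P : Fin n → Fin 2 → ℝ) : Prop :=
  (∀ i j, P i j ∈ Set.Icc (0:ℝ) 1) ∧
    ∀ Q : Fin n → Fin 2 → ℝ, (∀ i j, Q i j ∈ Set.Icc (0:ℝ) 1) → starDisc P ≤ starDisc Q

/-- Up-shift: replace `x⁽ⁱ⁾` by `(x⁽ⁱ⁾₁, x⁽ⁱ⁾₂ + δ)`. -/
def upShift {n : ℕ} (P : Fin n → Fin 2 → ℝ) (i : Fin n) (δ : ℝ) : Fin n → Fin 2 → ℝ :=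
  Function.update P i (fun j => P i j + if j = (1 : Fin 2) then δ else 0)

/-- Right-shift: replace `x⁽ⁱ⁾` by `(x⁽ⁱ⁾₁ + δ, x⁽ⁱ⁾₂)`. -/
def rightShift {n : ℕ} (P : Fin n → Fin 2 → ℝ) (i : Fin n) (δ : ℝ) : Fin n → Fin 2 → ℝ :=
  Function.update P i (fun j => P i j + if j = (0 : Fin 2) then δ else 0)

/-- Down-shift: replace `x⁽ⁱ⁾` by `(x⁽ⁱ⁾₁, x⁽ⁱ⁾₂ − δ)`. -/
def downShift {n : ℕ} (P : Fin n → Fin 2 → ℝ) (i : Fin n) (δ : ℝ) : Fin n → Fin 2 → ℝ :=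
  Function.update P i (fun j => P i j - if j = (1 : Fin 2) then δ else 0)

/-- Left-shift: replace `x⁽ⁱ⁾` by `(x⁽ⁱ⁾₁ − δ, x⁽ⁱ⁾₂)`. -/
def leftShift {n : ℕ} (P : Fin n → Fin 2 → ℝ) (i : Fin n) (δ : ℝ) : Fin n → Fin 2 → ℝ :=
  Function.update P i (fun j => P i j - if j = (0 : Fin 2) then δ else 0)

/-- An up-shift of `x⁽ⁱ⁾` by `δ` is admissible if some other point lies (weakly) below-left
of `x⁽ⁱ⁾` and `δ ≤ 1/n − min{x⁽ⁱ⁾₂ − x⁽ᵏ⁾₂ : k ≠ i, x⁽ᵏ⁾ ≤ x⁽ⁱ⁾}`. -/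
def AdmissibleUp {n : ℕ} (P : Fin n → Fin 2 → ℝ) (i : Fin n) (δ : ℝ) : Prop :=
  (∃ k, k ≠ i ∧ ∀ j, P k j ≤ P i j) ∧
    δ ≤ 1 / n - sInf {t : ℝ | ∃ k, k ≠ i ∧ (∀ j, P k j ≤ P i j) ∧ t = P i 1 - P k 1}

/-- Admissibility of a right-shift (same as `AdmissibleUp` with the first coordinate). -/
def AdmissibleRight {n : ℕ} (P : Fin n → Fin 2 → ℝ) (i : Fin n) (δ : ℝ) : Prop :=
  (∃ k, k ≠ i ∧ ∀ j, P k j ≤ P i j) ∧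
    δ ≤ 1 / n - sInf {t : ℝ | ∃ k, k ≠ i ∧ (∀ j, P k j ≤ P i j) ∧ t = P i 0 - P k 0}

/-- A down-shift of `x⁽ⁱ⁾` by `δ` is admissible if some other point lies (weakly) above-right
of `x⁽ⁱ⁾` and `δ ≤ 1/n − min{x⁽ᵏ⁾₂ − x⁽ⁱ⁾₂ : k ≠ i, x⁽ᵏ⁾ ≥ x⁽ⁱ⁾}`. -/
def AdmissibleDown {n : ℕ} (P : Fin n → Fin 2 → ℝ) (i : Fin n) (δ : ℝ) : Prop :=
  (∃ k, k ≠ i ∧ ∀ j, P i j ≤ P k j) ∧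
    δ ≤ 1 / n - sInf {t : ℝ | ∃ k, k ≠ i ∧ (∀ j, P i j ≤ P k j) ∧ t = P k 1 - P i 1}

/-- Admissibility of a left-shift (same as `AdmissibleDown` with the first coordinate). -/
def AdmissibleLeft {n : ℕ} (P : Fin n → Fin 2 → ℝ) (i : Fin n) (δ : ℝ) : Prop :=
  (∃ k, k ≠ i ∧ ∀ j, P i j ≤ P k j) ∧
    δ ≤ 1 / n - sInf {t : ℝ | ∃ k, k ≠ i ∧ (∀ j, P i j ≤ P k j) ∧ t = P k 0 - P i 0}

lemma prod_fin_two (f : Fin 2 → ℝ) {a b : Fin 2} (hab : a ≠ b) :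
    ∏ j, f j = f a * f b := by
  fin_cases a <;> fin_cases b <;> simp_all [Fin.prod_univ_two, mul_comm]

lemma fin_two_cases {a b : Fin 2} (hab : a ≠ b) (j : Fin 2) : j = a ∨ j = b := by
  fin_cases a <;> fin_cases b <;> fin_cases j <;> simp_all

lemma localDisc_le_one {n d : ℕ} (P : Fin n → Fin d → ℝ) (q : Fin d → ℝ)
    (hq : ∀ j, q j ∈ Set.Icc (0:ℝ) 1) : localDisc P q ≤ 1 := by
  have hc : ∀ c : ℕ, c ≤ n → (c : ℝ) / n ≤ 1 := by
    intro c hcn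
    rcases Nat.eq_zero_or_pos n with h0 | h0
    · subst h0; simp at hcn; simp [hcn]
    · rw [div_le_one (by exact_mod_cast h0)]; exact_mod_cast hcn
  have hprod0 : 0 ≤ ∏ j, q j := Finset.prod_nonneg fun j _ => (hq j).1
  have hprod1 : ∏ j, q j ≤ 1 :=
    Finset.prod_le_one (fun j _ => (hq j).1) (fun j _ => (hq j).2)
  have h1 : openDisc P q ≤ 1 := by
    have : (0:ℝ) ≤ (openCount P q : ℝ) / n := by positivity
    unfold openDisc; linarith
  have h2 : closedDisc P q ≤ 1 := by
    have := hc (closedCount P q) (le_trans (Finset.card_filter_le _ _) (by simp))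
    unfold closedDisc; linarith
  exact max_le h1 h2

lemma openDisc_le_starDisc {n d : ℕ} (P : Fin n → Fin d → ℝ) (q : Fin d → ℝ)
    (hq : ∀ j, q j ∈ Set.Icc (0:ℝ) 1) : openDisc P q ≤ starDisc P := by
  have hb : BddAbove {r : ℝ | ∃ q : Fin d → ℝ, (∀ j, q j ∈ Set.Icc (0:ℝ) 1) ∧ r = localDisc P q} := by
    refine ⟨1, ?_⟩
    rintro r ⟨q', hq', rfl⟩
    exact localDisc_le_one P q' hq'
  exact le_trans (le_max_left _ _) (le_csSup hb ⟨q, hq, rfl⟩)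

lemma key_shift {n : ℕ} (P : Fin n → Fin 2 → ℝ) (hP : ∀ i j, P i j ∈ Set.Icc (0:ℝ) 1)
    (i : Fin n) (δ : ℝ) (hδ : 0 < δ) {a b : Fin 2} (hab : a ≠ b)
    (hex : ∃ k, k ≠ i ∧ ∀ j, P k j ≤ P i j)
    (hadm : δ ≤ 1 / n - sInf {t : ℝ | ∃ k, k ≠ i ∧ (∀ j, P k j ≤ P i j) ∧ t = P i a - P k a})
    (q : Fin 2 → ℝ) (hq : ∀ j, q j ∈ Set.Icc (0:ℝ) 1) :
    openDisc (Function.update P i (fun j => P i j + if j = a then δ else 0)) q ≤ starDisc P := by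
  set P' := Function.update P i (fun j => P i j + if j = a then δ else 0) with hP'def
  have hP'i : ∀ j, P' i j = P i j + if j = a then δ else 0 := by
    intro j; rw [hP'def, Function.update_self]
  have hP'm : ∀ m, m ≠ i → P' m = P m := fun m hm => Function.update_of_ne hm _ _
  have hite : ∀ j : Fin 2, (0:ℝ) ≤ if j = a then δ else 0 := by
    intro j; split_ifs <;> linarith
  by_cases hi' : ∀ j, P' i j < q j
  · -- the shifted point is still in the box: counts agree
    have hset : (univ.filter fun m : Fin n => ∀ j, P' m j < q j)
        = univ.filter fun m : Fin n => ∀ j, P m j < q j := by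
      ext m
      simp only [mem_filter, mem_univ, true_and]
      by_cases hm : m = i
      · subst hm
        constructor
        · intro h j
          have h1 := h j
          rw [hP'i] at h1
          have := hite j
          linarith
        · intro _; exact hi'
      · rw [hP'm m hm]
    have : openDisc P' q = openDisc P q := by
      unfold openDisc openCount; rw [hset]
    rw [this]; exact openDisc_le_starDisc P q hq
  · by_cases hi : ∀ j, P i j < q j
    · -- bad case: point i left the box
      have hqa : q a ≤ P i a + δ := by
        push_neg at hi'
        obtain ⟨j, hj⟩ := hi'
        by_cases hja : j = a
        · subst hja; rw [hP'i] at hj; simpa using hj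
        · exfalso
          rw [hP'i] at hj
          simp only [hja, if_false, add_zero] at hj
          exact absurd (hi j) (not_lt.mpr hj)
      -- extract a minimizer k of the sInf
      set S := {t : ℝ | ∃ k, k ≠ i ∧ (∀ j, P k j ≤ P i j) ∧ t = P i a - P k a} with hS
      have hSne : S.Nonempty := by
        obtain ⟨k, hk1, hk2⟩ := hex
        exact ⟨P i a - P k a, k, hk1, hk2, rfl⟩
      have hSfin : S.Finite := by
        apply Set.Finite.subset (Set.finite_range fun k : Fin n => P i a - P k a)
        rintro t ⟨k, _, _, rfl⟩; exact ⟨k, rfl⟩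
      obtain ⟨k, hki, hkle, hkeq⟩ := hSne.csInf_mem hSfin
      have hδk : P i a + δ ≤ P k a + 1 / n := by
        rw [hkeq] at hadm; linarith
      have hqak : q a ≤ P k a + 1 / n := le_trans hqa hδk
      set q' : Fin 2 → ℝ := fun j => if j = a then P k a else q j with hq'def
      have hq'mem : ∀ j, q' j ∈ Set.Icc (0:ℝ) 1 := by
        intro j; rw [hq'def]; dsimp only; split_ifs
        · exact hP k a
        · exact hq j
      set sP := univ.filter fun m : Fin n => ∀ j, P m j < q j with hsP
      have hiP : i ∈ sP := by simp only [hsP, mem_filter, mem_univ, true_and]; exact hi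
      have hkP : k ∈ sP := by
        simp only [hsP, mem_filter, mem_univ, true_and]
        exact fun j => lt_of_le_of_lt (hkle j) (hi j)
      have hs' : (univ.filter fun m : Fin n => ∀ j, P' m j < q j) = sP.erase i := by
        ext m
        simp only [mem_filter, mem_univ, true_and, mem_erase, hsP]
        by_cases hm : m = i
        · subst hm; simp [hi']
        · rw [hP'm m hm]; simp [hm]
      have hcard2 : 2 ≤ sP.card :=
        Finset.one_lt_card.mpr ⟨i, hiP, k, hkP, fun h => hki h.symm⟩
      have hcard' : ((univ.filter fun m : Fin n => ∀ j, P' m j < q j).card : ℝ)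
          = (sP.card : ℝ) - 1 := by
        rw [hs', Finset.card_erase_of_mem hiP]
        rw [Nat.cast_sub (by omega)]
        norm_num
      set sQ := univ.filter fun m : Fin n => ∀ j, P m j < q' j with hsQ
      have hsub : sQ ⊆ (sP.erase k).erase i := by
        intro m hm
        simp only [hsQ, mem_filter, mem_univ, true_and] at hm
        have hma : P m a < P k a := by
          have := hm a; rw [hq'def] at this; simpa using this
        have hmb : P m b < q b := by
          have := hm b; rw [hq'def] at this
          simpa [hab.symm] using this
        have hmq : ∀ j, P m j < q j := by
          intro j
          rcases fin_two_cases hab j with hj | hj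
          · rw [hj]; exact lt_of_lt_of_le hma (le_trans (hkle a) (le_of_lt (hi a)))
          · rw [hj]; exact hmb
        have hmi : m ≠ i := by
          rintro rfl
          exact absurd (lt_of_lt_of_le hma (hkle a)) (lt_irrefl _)
        have hmk : m ≠ k := by
          rintro rfl; exact absurd hma (lt_irrefl _)
        exact mem_erase.mpr ⟨hmi, mem_erase.mpr ⟨hmk, by
          simp only [hsP, mem_filter, mem_univ, true_and]; exact hmq⟩⟩
      have hcardQ : sQ.card + 2 ≤ sP.card := by
        have h1 := Finset.card_le_card hsub
        have h2 : ((sP.erase k).erase i).card = sP.card - 2 := by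
          rw [Finset.card_erase_of_mem, Finset.card_erase_of_mem hkP]
          · omega
          · exact mem_erase.mpr ⟨fun h => hki h.symm, hiP⟩
        omega
      have hcardQR : (sQ.card : ℝ) ≤ (sP.card : ℝ) - 2 := by
        have : (sQ.card : ℝ) + 2 ≤ (sP.card : ℝ) := by exact_mod_cast hcardQ
        linarith
      have hn : (0:ℝ) < n := by exact_mod_cast i.pos
      have hq0b : (0:ℝ) ≤ q b := (hq b).1
      have hqb1 : q b ≤ 1 := (hq b).2
      have hka0 : (0:ℝ) ≤ P k a := (hP k a).1
      have step1 : openDisc P' q = q a * q b - ((sP.card : ℝ) - 1) / n := by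
        unfold openDisc openCount
        rw [prod_fin_two q hab, hcard']
      have step4 : openDisc P q' = P k a * q b - (sQ.card : ℝ) / n := by
        unfold openDisc openCount
        rw [prod_fin_two q' hab]
        have e1 : q' a = P k a := by rw [hq'def]; simp
        have e2 : q' b = q b := by rw [hq'def]; simp [hab.symm]
        rw [e1, e2, ← hsQ]
      have hmul : q a * q b ≤ P k a * q b + 1 / n := by
        have h1 : q a * q b ≤ (P k a + 1 / n) * q b :=
          mul_le_mul_of_nonneg_right hqak hq0b
        have h2 : (1 / n) * q b ≤ (1 / n) * 1 :=
          mul_le_mul_of_nonneg_left hqb1 (by positivity)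
        nlinarith
      have hdiv : ((sP.card : ℝ) - 1) / n = ((sP.card : ℝ) - 2) / n + 1 / n := by
        rw [← add_div]; congr 1; ring
      have hdiv2 : (sQ.card : ℝ) / n ≤ ((sP.card : ℝ) - 2) / n := by
        gcongr
      calc openDisc P' q = q a * q b - ((sP.card : ℝ) - 1) / n := step1
        _ ≤ P k a * q b - (sQ.card : ℝ) / n := by
            rw [hdiv]; linarith
        _ = openDisc P q' := step4.symm
        _ ≤ starDisc P := openDisc_le_starDisc P q' hq'mem
    · -- point i was outside the box already
      have hset : (univ.filter fun m : Fin n => ∀ j, P' m j < q j)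
          = univ.filter fun m : Fin n => ∀ j, P m j < q j := by
        ext m
        simp only [mem_filter, mem_univ, true_and]
        by_cases hm : m = i
        · subst hm; simp [hi', hi]
        · rw [hP'm m hm]
      have : openDisc P' q = openDisc P q := by
        unfold openDisc openCount; rw [hset]
      rw [this]; exact openDisc_le_starDisc P q hq

/-- For an optimal `n`-point tuple `P*` in `[0,1]²`, any admissible up-shift
(resp. right-shift) never violates an open-box constraint: the open local discrepancy of the
shifted tuple at any `q ∈ [0,1]²` is at most `d*(P*)`. -/
theorem stmt_5 {n : ℕ} (P : Fin n → Fin 2 → ℝ) (hopt : IsOptimal P) (i : Fin n) (δ : ℝ)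
    (q : Fin 2 → ℝ) (hq : ∀ j, q j ∈ Set.Icc (0:ℝ) 1) :
    (0 < δ → δ ≤ 1 - P i 1 → AdmissibleUp P i δ →
      openDisc (upShift P i δ) q ≤ starDisc P) ∧
    (0 < δ → δ ≤ 1 - P i 0 → AdmissibleRight P i δ →
      openDisc (rightShift P i δ) q ≤ starDisc P) := by
  constructor
  · intro hδ _ hadm
    obtain ⟨hex, hbound⟩ := hadm
    have := key_shift P hopt.1 i δ hδ (show (1 : Fin 2) ≠ 0 by decide) hex hbound q hq
    rw [upShift]
    exact this
  · intro hδ _ hadm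
    obtain ⟨hex, hbound⟩ := hadm
    have := key_shift P hopt.1 i δ hδ (show (0 : Fin 2) ≠ 1 by decide) hex hbound q hq
    rw [rightShift]
    exact this
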